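/- If Q is a hierarchical self-join-free Boolean conjunctive query that is not of the form Q() :- R() (a single nullary atom), then either some variable of Q occurs in exactly one atom (Rule 1 applies), or some two distinct atoms of Q have the same variable set (Rule 2 applies). -/

import Mathlib

/-- A query (given by the variable sets of its atoms, indexed by `A`) is
hierarchical if for any two variables, their sets of atoms are comparable or disjoint. -/
def Hierarchical {A V : Type*} (vars : A → Finset V) : Prop :=
  ∀ X Y : V, {a | X ∈ vars a} ⊆ {a | Y ∈ vars a} ∨
    {a | Y ∈ vars a} ⊆ {a | X ∈ vars a} ∨
    {a | X ∈ vars a} ∩ {a | Y ∈ vars a} = ∅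

/-- If a hierarchical query is not a single nullary atom, then Rule 1 or
Rule 2 applies. -/
theorem stmt_18 {A V : Type*} [Fintype A] [Nonempty A] [DecidableEq V]
    (vars : A → Finset V) (hhier : Hierarchical vars)
    (h : ¬ ((∀ a b : A, a = b) ∧ ∀ a : A, vars a = ∅)) :
    (∃ (Y : V) (a₀ : A), ∀ a, Y ∈ vars a ↔ a = a₀) ∨
    (∃ a₁ a₂ : A, a₁ ≠ a₂ ∧ vars a₁ = vars a₂) := by
  classical
  by_cases hall : ∀ a : A, vars a = ∅
  · right
    have h2 : ¬ ∀ a b : A, a = b := fun hab => h ⟨hab, hall⟩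
    push_neg at h2
    obtain ⟨a, b, hab⟩ := h2
    exact ⟨a, b, hab, by rw [hall a, hall b]⟩
  · push_neg at hall
    obtain ⟨a0, ha0⟩ := hall
    obtain ⟨X0, hX0⟩ := ha0
    set att : V → Finset A := fun X => Finset.univ.filter (fun a => X ∈ vars a) with hatt
    have hmem : ∀ (X : V) (a : A), a ∈ att X ↔ X ∈ vars a := by
      intro X a; simp [hatt]
    let S : Set ℕ := {n | ∃ X, (att X).Nonempty ∧ (att X).card = n}
    have hS : S.Nonempty := ⟨(att X0).card, X0, ⟨a0, (hmem X0 a0).mpr hX0⟩, rfl⟩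
    obtain ⟨X, hXne, hXcard⟩ := Nat.sInf_mem hS
    have hmin : ∀ Y, (att Y).Nonempty → (att X).card ≤ (att Y).card := by
      intro Y hY
      rw [hXcard]; exact Nat.sInf_le ⟨Y, hY, rfl⟩
    have key : ∀ (Y : V) (a : A), a ∈ att X → a ∈ att Y → att X ⊆ att Y := by
      intro Y a haX haY
      rcases hhier X Y with hs | hs | hs
      · intro b hb
        exact (hmem Y b).mpr (hs ((hmem X b).mp hb))
      · have hsub : att Y ⊆ att X := fun b hb => (hmem X b).mpr (hs ((hmem Y b).mp hb))
        have heq : att Y = att X :=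
          Finset.eq_of_subset_of_card_le hsub (hmin Y ⟨a, haY⟩)
        rw [heq]
      · exfalso
        have hmemset : a ∈ ({a | X ∈ vars a} ∩ {a | Y ∈ vars a} : Set A) :=
          ⟨(hmem X a).mp haX, (hmem Y a).mp haY⟩
        rw [hs] at hmemset; exact hmemset
    obtain ⟨a1, ha1⟩ := hXne
    by_cases hone : ∀ b ∈ att X, b = a1
    · left
      exact ⟨X, a1, fun a =>
        ⟨fun ha => hone a ((hmem X a).mpr ha), fun ha => ha ▸ (hmem X a1).mp ha1⟩⟩
    · push_neg at hone
      obtain ⟨a2, ha2, hne⟩ := hone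
      right
      refine ⟨a1, a2, fun e => hne e.symm, ?_⟩
      ext Y
      constructor
      · intro hY
        exact (hmem Y a2).mp (key Y a1 ha1 ((hmem Y a1).mpr hY) ha2)
      · intro hY
        exact (hmem Y a1).mp (key Y a2 ha2 ((hmem Y a2).mpr hY) ha1)
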